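/- arXiv:1601.06316 — 2 statements merged into one kernel-verified Lean document; each statement's English description precedes it below -/
import Mathlib

section
/- Let n ≥ 1, let a_1, …, a_n be nonzero real numbers and Δ ≠ 0 a real number. Define the symmetric tridiagonal n × n real matrix M by M_{ii} = 1/(Δ²·a_i²), M_{i,i+1} = M_{i+1,i} = −1/(2·Δ²·a_i·a_{i+1}), and M_{ij} = 0 whenever |i − j| ≥ 2. Then M is positive definite: xᵀMx > 0 for every nonzero x ∈ ℝⁿ. -/
open Matrix

private lemma sum_ite_val_eq {n : ℕ} (c : ℕ) (f : Fin n → ℝ) :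
    (∑ j : Fin n, if (j : ℕ) = c then f j else 0)
      = if h : c < n then f ⟨c, h⟩ else 0 := by
  split_ifs with h
  · rw [Finset.sum_eq_single (⟨c, h⟩ : Fin n)]
    · simp
    · intro j _ hj
      rw [if_neg]
      intro hc
      exact hj (Fin.ext hc)
    · simp
  · apply Finset.sum_eq_zero
    intro j _
    rw [if_neg]
    intro hc
    exact h (hc ▸ j.isLt)

private lemma square_expand (n : ℕ) (y : ℕ → ℝ) (h : y n = 0) :
    2 * ((∑ k ∈ Finset.range n, (y k)^2) - ∑ k ∈ Finset.range n, y k * y (k+1))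
      = ∑ k ∈ Finset.range (n+1), (y k - (if k = 0 then 0 else y (k-1)))^2 := by
  have h1 : ∑ k ∈ Finset.range (n+1), (y k - (if k = 0 then 0 else y (k-1)))^2
      = (∑ k ∈ Finset.range n, (y (k+1) - y k)^2) + (y 0)^2 := by
    rw [Finset.sum_range_succ']
    simp
  have h2 : ∑ k ∈ Finset.range n, (y (k+1) - y k)^2
      = (∑ k ∈ Finset.range n, (y (k+1))^2) + (∑ k ∈ Finset.range n, (y k)^2)
        - 2 * ∑ k ∈ Finset.range n, y k * y (k+1) := by
    rw [Finset.mul_sum, ← Finset.sum_add_distrib, ← Finset.sum_sub_distrib]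
    apply Finset.sum_congr rfl
    intros; ring
  have h3 := Finset.sum_range_succ' (fun k => (y k)^2) n
  have h4 := Finset.sum_range_succ (fun k => (y k)^2) n
  simp only [h] at h4
  rw [h1, h2]
  linarith

/-- The symmetric tridiagonal matrix with diagonal entries
`1/(Δ² aᵢ²)`, off-diagonal entries `−1/(2 Δ² aᵢ aᵢ₊₁)`, and zero entries at distance
`≥ 2` from the diagonal (with all `aᵢ ≠ 0` and `Δ ≠ 0`) is positive definite:
`xᵀ M x > 0` for every nonzero `x ∈ ℝⁿ`. -/
theorem tridiagonal_smoothness_matrix_posDef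
    (n : ℕ) (hn : 1 ≤ n) (a : Fin n → ℝ) (ha : ∀ i, a i ≠ 0)
    (Δ : ℝ) (hΔ : Δ ≠ 0) (M : Matrix (Fin n) (Fin n) ℝ)
    (hdiag : ∀ i : Fin n, M i i = 1 / (Δ ^ 2 * (a i) ^ 2))
    (hoff : ∀ i j : Fin n, (i : ℕ) + 1 = (j : ℕ) →
      M i j = -1 / (2 * Δ ^ 2 * a i * a j) ∧ M j i = -1 / (2 * Δ ^ 2 * a i * a j))
    (hfar : ∀ i j : Fin n, (i : ℕ) + 2 ≤ (j : ℕ) ∨ (j : ℕ) + 2 ≤ (i : ℕ) → M i j = 0) :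
    ∀ x : Fin n → ℝ, x ≠ 0 → 0 < x ⬝ᵥ M.mulVec x := by
  intro x hx
  set Y : ℕ → ℝ := fun k => if h : k < n then x ⟨k, h⟩ / (Δ * a ⟨k, h⟩) else 0 with hY
  have hYn : Y n = 0 := dif_neg (lt_irrefl n)
  have hYi : ∀ i : Fin n, Y (i : ℕ) = x i / (Δ * a i) := by
    intro i; simp [hY, i.isLt]
  -- pointwise description of the summands
  have hT : ∀ i j : Fin n, x i * (M i j * x j)
      = (if j = i then (Y (i : ℕ))^2 else 0)
        + (if (j : ℕ) = (i : ℕ) + 1 then -(Y (i : ℕ) * Y (j : ℕ))/2 else 0)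
        + (if (i : ℕ) = (j : ℕ) + 1 then -(Y (i : ℕ) * Y (j : ℕ))/2 else 0) := by
    intro i j
    rcases lt_trichotomy (i : ℕ) (j : ℕ) with h | h | h
    · rcases eq_or_lt_of_le (Nat.succ_le_of_lt h) with h1 | h1
      · obtain ⟨hMij, _⟩ := hoff i j h1
        rw [if_neg (by intro hji; omega), if_pos h1.symm, if_neg (by omega),
          hMij, hYi, hYi]
        have hai := ha i; have haj := ha j
        field_simp
        ring
      · rw [hfar i j (Or.inl h1), if_neg (by intro hji; omega),
          if_neg (by omega), if_neg (by omega)]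
        ring
    · have hij : i = j := Fin.ext h
      subst hij
      rw [if_pos rfl, if_neg (show ¬((i : ℕ) = (i : ℕ) + 1) by omega), hdiag, hYi]
      have hai := ha i
      field_simp
      ring
    · rcases eq_or_lt_of_le (Nat.succ_le_of_lt h) with h1 | h1
      · obtain ⟨_, hMji⟩ := hoff j i h1
        rw [if_neg (by intro hji; omega), if_neg (by omega), if_pos h1.symm,
          hMji, hYi, hYi]
        have hai := ha i; have haj := ha j
        field_simp
        ring
      · rw [hfar i j (Or.inr h1), if_neg (by intro hji; omega),
          if_neg (by omega), if_neg (by omega)]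
        ring
  -- the three pieces of the double sum
  have hA : (∑ i : Fin n, ∑ j : Fin n, if j = i then (Y (i : ℕ))^2 else 0)
      = ∑ k ∈ Finset.range n, (Y k)^2 := by
    have : ∀ i : Fin n, (∑ j : Fin n, if j = i then (Y (i : ℕ))^2 else 0)
        = (Y (i : ℕ))^2 := by
      intro i
      rw [Finset.sum_ite_eq' Finset.univ i (fun _ => (Y (i : ℕ))^2)]
      simp
    rw [Finset.sum_congr rfl (fun i _ => this i)]
    exact Fin.sum_univ_eq_sum_range (fun k => (Y k)^2) n
  have hB : (∑ i : Fin n, ∑ j : Fin n,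
        if (j : ℕ) = (i : ℕ) + 1 then -(Y (i : ℕ) * Y (j : ℕ))/2 else 0)
      = ∑ k ∈ Finset.range n, -(Y k * Y (k+1))/2 := by
    have : ∀ i : Fin n,
        (∑ j : Fin n, if (j : ℕ) = (i : ℕ) + 1 then -(Y (i : ℕ) * Y (j : ℕ))/2 else 0)
        = -(Y (i : ℕ) * Y ((i : ℕ)+1))/2 := by
      intro i
      rw [sum_ite_val_eq ((i : ℕ)+1) (fun j => -(Y (i : ℕ) * Y (j : ℕ))/2)]
      split_ifs with h
      · rfl
      · have hz : Y ((i : ℕ)+1) = 0 := dif_neg h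
        rw [hz]; ring
    rw [Finset.sum_congr rfl (fun i _ => this i)]
    exact Fin.sum_univ_eq_sum_range (fun k => -(Y k * Y (k+1))/2) n
  have hC : (∑ i : Fin n, ∑ j : Fin n,
        if (i : ℕ) = (j : ℕ) + 1 then -(Y (i : ℕ) * Y (j : ℕ))/2 else 0)
      = ∑ k ∈ Finset.range n, -(Y (k+1) * Y k)/2 := by
    rw [Finset.sum_comm]
    have : ∀ j : Fin n,
        (∑ i : Fin n, if (i : ℕ) = (j : ℕ) + 1 then -(Y (i : ℕ) * Y (j : ℕ))/2 else 0)
        = -(Y ((j : ℕ)+1) * Y (j : ℕ))/2 := by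
      intro j
      rw [sum_ite_val_eq ((j : ℕ)+1) (fun i => -(Y (i : ℕ) * Y (j : ℕ))/2)]
      split_ifs with h
      · rfl
      · have hz : Y ((j : ℕ)+1) = 0 := dif_neg h
        rw [hz]; ring
    rw [Finset.sum_congr rfl (fun j _ => this j)]
    exact Fin.sum_univ_eq_sum_range (fun k => -(Y (k+1) * Y k)/2) n
  have key : x ⬝ᵥ M.mulVec x
      = (∑ k ∈ Finset.range n, (Y k)^2) - ∑ k ∈ Finset.range n, Y k * Y (k+1) := by
    have expand : x ⬝ᵥ M.mulVec x = ∑ i : Fin n, ∑ j : Fin n, x i * (M i j * x j) := by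
      simp [dotProduct, mulVec, Finset.mul_sum]
    rw [expand, Finset.sum_congr rfl
      (fun i _ => Finset.sum_congr rfl (fun j _ => hT i j))]
    have split : ∑ i : Fin n, ∑ j : Fin n,
        ((if j = i then (Y (i : ℕ))^2 else 0)
          + (if (j : ℕ) = (i : ℕ) + 1 then -(Y (i : ℕ) * Y (j : ℕ))/2 else 0)
          + (if (i : ℕ) = (j : ℕ) + 1 then -(Y (i : ℕ) * Y (j : ℕ))/2 else 0))
        = (∑ i : Fin n, ∑ j : Fin n, if j = i then (Y (i : ℕ))^2 else 0)
          + (∑ i : Fin n, ∑ j : Fin n,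
              if (j : ℕ) = (i : ℕ) + 1 then -(Y (i : ℕ) * Y (j : ℕ))/2 else 0)
          + (∑ i : Fin n, ∑ j : Fin n,
              if (i : ℕ) = (j : ℕ) + 1 then -(Y (i : ℕ) * Y (j : ℕ))/2 else 0) := by
      rw [← Finset.sum_add_distrib, ← Finset.sum_add_distrib]
      apply Finset.sum_congr rfl
      intro i _
      rw [← Finset.sum_add_distrib, ← Finset.sum_add_distrib]
    rw [split, hA, hB, hC, ← Finset.sum_add_distrib, ← Finset.sum_add_distrib,
      ← Finset.sum_sub_distrib]
    apply Finset.sum_congr rfl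
    intros; ring
  -- positivity
  have key2 : 2 * (x ⬝ᵥ M.mulVec x)
      = ∑ k ∈ Finset.range (n+1), (Y k - (if k = 0 then 0 else Y (k-1)))^2 := by
    rw [key]; exact square_expand n Y hYn
  have hpos : 0 < 2 * (x ⬝ᵥ M.mulVec x) := by
    rw [key2]
    rcases (Finset.sum_nonneg (fun k _ => sq_nonneg
        (Y k - (if k = 0 then 0 else Y (k-1))))).lt_or_eq with h | h
    · exact h
    · exfalso
      apply hx
      have hzero : ∀ k ∈ Finset.range (n+1),
          (Y k - (if k = 0 then 0 else Y (k-1)))^2 = 0 :=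
        (Finset.sum_eq_zero_iff_of_nonneg (fun k _ => sq_nonneg _)).mp h.symm
      have hYzero : ∀ k, k ≤ n → Y k = 0 := by
        intro k
        induction k with
        | zero =>
          intro _
          have h0 := hzero 0 (Finset.mem_range.mpr (Nat.succ_pos n))
          simp at h0
          exact h0
        | succ k ih =>
          intro hk
          have hterm := hzero (k+1) (Finset.mem_range.mpr (by omega))
          simp at hterm
          have hk0 := ih (by omega)
          linarith [hterm]
      funext i
      have hz := hYzero (i : ℕ) (le_of_lt i.isLt)
      rw [hYi] at hz
      have : x i = 0 := by
        rcases div_eq_zero_iff.mp hz with h' | h'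
        · exact h'
        · exact absurd h' (mul_ne_zero hΔ (ha i))
      simpa using this
  linarith
end

section
/- Let n = m·k with m, k ≥ 1, index travel-times by i ∈ Fin n and assign index i to block blk(i) = ⌊i/k⌋ ∈ Fin m. Let ω : Fin n → ℝ, a : Fin n → ℝ, σ : Fin m → ℝ all have nonzero values, and let Δ ≠ 0. Define Q = Q₁ + Q₂ + Q₃, where Q₁ is diagonal with (Q₁)_{ii} = 1/ω_i²; Q₂ is tridiagonal with (Q₂)_{ii} = 1/(Δ²·a_i²), (Q₂)_{i,i+1} = (Q₂)_{i+1,i} = −1/(2·Δ²·a_i·a_{i+1}), and 0 elsewhere; and (Q₃)_{i,i'} = 1/σ_{blk(i)}² if blk(i) = blk(i') and 0 otherwise. Then Q is positive definite, and consequently for any c ∈ ℝⁿ the quadratic-programming objective x ↦ (1/2)·xᵀQx + cᵀx is (strictly) convex on ℝⁿ. -/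
open Matrix Finset

/-- A sum of an indicator of a predicate with at most one solution, with nonnegative
value, is at most that value. -/
lemma ontrac_sum_ite_unique_le {n : ℕ} (P : Fin n → Prop) [DecidablePred P]
    (hP : ∀ i j, P i → P j → i = j) (v : ℝ) (hv : 0 ≤ v) :
    (∑ j : Fin n, if P j then v else 0) ≤ v := by
  classical
  by_cases h : ∃ j, P j
  · obtain ⟨j0, hj0⟩ := h
    rw [Finset.sum_eq_single j0]
    · simp [hj0]
    · intro b _ hb
      exact if_neg fun hPb => hb (hP b j0 hPb hj0)
    · simp
  · push_neg at h
    rw [Finset.sum_eq_zero fun j _ => if_neg (h j)]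
    exact hv

/-- Nonnegativity of the tridiagonal quadratic form `∑ yᵢ² − ∑ yᵢ yᵢ₊₁` (the off-diagonal
sum taken over adjacent ordered pairs). -/
lemma ontrac_tridiag_nonneg {n : ℕ} (y : Fin n → ℝ) :
    (∑ i : Fin n, ∑ j : Fin n, if (i : ℕ) + 1 = (j : ℕ) then y i * y j else 0)
      ≤ ∑ i : Fin n, (y i) ^ 2 := by
  classical
  have step1 : ∀ i j : Fin n,
      (if (i : ℕ) + 1 = (j : ℕ) then y i * y j else 0)
        ≤ (if (i : ℕ) + 1 = (j : ℕ) then ((y i) ^ 2 + (y j) ^ 2) / 2 else 0) := by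
    intro i j
    split
    · nlinarith [sq_nonneg (y i - y j)]
    · exact le_refl 0
  have h1 : (∑ i : Fin n, ∑ j : Fin n, if (i : ℕ) + 1 = (j : ℕ) then y i * y j else 0)
      ≤ ∑ i : Fin n, ∑ j : Fin n,
          if (i : ℕ) + 1 = (j : ℕ) then ((y i) ^ 2 + (y j) ^ 2) / 2 else 0 :=
    Finset.sum_le_sum fun i _ => Finset.sum_le_sum fun j _ => step1 i j
  have hsplit : ∀ i j : Fin n,
      (if (i : ℕ) + 1 = (j : ℕ) then ((y i) ^ 2 + (y j) ^ 2) / 2 else 0)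
        = (1 / 2) * (if (i : ℕ) + 1 = (j : ℕ) then (y i) ^ 2 else 0)
          + (1 / 2) * (if (i : ℕ) + 1 = (j : ℕ) then (y j) ^ 2 else 0) := by
    intro i j; split <;> ring
  have hSa : (∑ i : Fin n, ∑ j : Fin n, if (i : ℕ) + 1 = (j : ℕ) then (y i) ^ 2 else 0)
      ≤ ∑ i : Fin n, (y i) ^ 2 := by
    apply Finset.sum_le_sum
    intro i _
    exact ontrac_sum_ite_unique_le (fun j => (i : ℕ) + 1 = (j : ℕ))
      (fun b b' hb hb' => Fin.ext (by omega)) _ (sq_nonneg _)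
  have hSb : (∑ i : Fin n, ∑ j : Fin n, if (i : ℕ) + 1 = (j : ℕ) then (y j) ^ 2 else 0)
      ≤ ∑ i : Fin n, (y i) ^ 2 := by
    rw [Finset.sum_comm]
    apply Finset.sum_le_sum
    intro j _
    exact ontrac_sum_ite_unique_le (fun i => (i : ℕ) + 1 = (j : ℕ))
      (fun b b' hb hb' => Fin.ext (by omega)) _ (sq_nonneg _)
  calc (∑ i : Fin n, ∑ j : Fin n, if (i : ℕ) + 1 = (j : ℕ) then y i * y j else 0)
      ≤ ∑ i : Fin n, ∑ j : Fin n,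
          if (i : ℕ) + 1 = (j : ℕ) then ((y i) ^ 2 + (y j) ^ 2) / 2 else 0 := h1
    _ = (1 / 2) * (∑ i : Fin n, ∑ j : Fin n,
            if (i : ℕ) + 1 = (j : ℕ) then (y i) ^ 2 else 0)
        + (1 / 2) * (∑ i : Fin n, ∑ j : Fin n,
            if (i : ℕ) + 1 = (j : ℕ) then (y j) ^ 2 else 0) := by
        simp_rw [hsplit, Finset.sum_add_distrib, Finset.mul_sum]
    _ ≤ (1 / 2) * (∑ i : Fin n, (y i) ^ 2) + (1 / 2) * (∑ i : Fin n, (y i) ^ 2) := by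
        have := hSa; have := hSb; nlinarith
    _ = ∑ i : Fin n, (y i) ^ 2 := by ring

set_option maxHeartbeats 1000000
/-- The paper's Theorem 3: with `n = m·k` travel-times, block map
`blk i = ⌊i/k⌋`, nonzero `ω`, `a`, `σ`, `Δ`, the matrix `Q = Q₁ + Q₂ + Q₃` of the
maximum-likelihood quadratic program (diagonal `Q₁` with entries `1/ωᵢ²`, tridiagonal
smoothness matrix `Q₂`, and block-constant GPS matrix `Q₃`) is positive definite, and
consequently the QP objective `x ↦ (1/2) xᵀQx + cᵀx` is strictly convex on `ℝⁿ`. -/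
theorem ontrac_qp_matrix_posDef_and_objective_strictConvex
    (m k : ℕ) (hm : 1 ≤ m) (hk : 1 ≤ k)
    (blk : Fin (m * k) → Fin m) (hblk : ∀ i : Fin (m * k), (blk i : ℕ) = (i : ℕ) / k)
    (ω : Fin (m * k) → ℝ) (hω : ∀ i, ω i ≠ 0)
    (a : Fin (m * k) → ℝ) (ha : ∀ i, a i ≠ 0)
    (σ : Fin m → ℝ) (hσ : ∀ j, σ j ≠ 0)
    (Δ : ℝ) (hΔ : Δ ≠ 0)
    (Q1 Q2 Q3 Q : Matrix (Fin (m * k)) (Fin (m * k)) ℝ)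
    (hQ1 : ∀ i j : Fin (m * k), Q1 i j = if i = j then 1 / (ω i) ^ 2 else 0)
    (hQ2diag : ∀ i : Fin (m * k), Q2 i i = 1 / (Δ ^ 2 * (a i) ^ 2))
    (hQ2off : ∀ i j : Fin (m * k), (i : ℕ) + 1 = (j : ℕ) →
      Q2 i j = -1 / (2 * Δ ^ 2 * a i * a j) ∧ Q2 j i = -1 / (2 * Δ ^ 2 * a i * a j))
    (hQ2far : ∀ i j : Fin (m * k),
      (i : ℕ) + 2 ≤ (j : ℕ) ∨ (j : ℕ) + 2 ≤ (i : ℕ) → Q2 i j = 0)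
    (hQ3 : ∀ i i' : Fin (m * k),
      Q3 i i' = if blk i = blk i' then 1 / (σ (blk i)) ^ 2 else 0)
    (hQ : Q = Q1 + Q2 + Q3) :
    Q.PosDef ∧
    ∀ c : Fin (m * k) → ℝ,
      StrictConvexOn ℝ Set.univ
        (fun x : Fin (m * k) → ℝ => (1 / 2) * (x ⬝ᵥ Q.mulVec x) + c ⬝ᵥ x) := by
  classical
  -- symmetry of Q2
  have hQ2sym : ∀ i j, Q2 i j = Q2 j i := by
    intro i j
    rcases eq_or_ne i j with rfl | hne
    · rfl
    · by_cases h1 : (i : ℕ) + 1 = (j : ℕ)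
      · obtain ⟨e1, e2⟩ := hQ2off i j h1
        rw [e1, e2]
      · by_cases h2 : (j : ℕ) + 1 = (i : ℕ)
        · obtain ⟨e1, e2⟩ := hQ2off j i h2
          rw [e1, e2]
        · have hv : (i : ℕ) ≠ (j : ℕ) := fun h => hne (Fin.ext h)
          rw [hQ2far i j (by omega), hQ2far j i (by omega)]
  -- entrywise symmetry of Q
  have hQsym : ∀ i j, Q i j = Q j i := by
    intro i j
    rw [hQ]
    simp only [Matrix.add_apply, hQ1, hQ3, hQ2sym i j]
    congr 1
    · congr 1
      rcases eq_or_ne i j with rfl | h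
      · rfl
      · rw [if_neg h, if_neg (Ne.symm h)]
    · rcases eq_or_ne (blk i) (blk j) with h | h
      · rw [if_pos h, if_pos h.symm, h]
      · rw [if_neg h, if_neg (Ne.symm h)]
  have hherm : Q.IsHermitian := by
    ext i j
    simp only [Matrix.conjTranspose_apply, star_trivial]
    exact hQsym j i
  -- symmetry of the bilinear form
  have hsymm : ∀ u v : Fin (m * k) → ℝ, u ⬝ᵥ Q.mulVec v = v ⬝ᵥ Q.mulVec u := by
    intro u v
    simp only [dotProduct, Matrix.mulVec, Finset.mul_sum]
    rw [Finset.sum_comm]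
    refine Finset.sum_congr rfl fun j _ => Finset.sum_congr rfl fun i _ => ?_
    rw [hQsym i j]; ring
  -- positivity of the quadratic form
  have key : ∀ x : Fin (m * k) → ℝ, x ≠ 0 → 0 < x ⬝ᵥ Q.mulVec x := by
    intro x hx
    have hexp : x ⬝ᵥ Q.mulVec x
        = x ⬝ᵥ Q1.mulVec x + x ⬝ᵥ Q2.mulVec x + x ⬝ᵥ Q3.mulVec x := by
      rw [hQ]
      simp [Matrix.add_mulVec, dotProduct_add]
    -- S1
    have hS1eq : x ⬝ᵥ Q1.mulVec x = ∑ i, (x i / ω i) ^ 2 := by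
      simp only [dotProduct, Matrix.mulVec, hQ1]
      refine Finset.sum_congr rfl fun i _ => ?_
      rw [Finset.sum_eq_single i]
      · rw [if_pos rfl]
        field_simp
      · intro b _ hb
        rw [if_neg (Ne.symm hb), zero_mul]
      · simp
    have hS1 : 0 < x ⬝ᵥ Q1.mulVec x := by
      rw [hS1eq]
      obtain ⟨i0, hi0⟩ := Function.ne_iff.mp hx
      refine Finset.sum_pos' (fun i _ => sq_nonneg _) ⟨i0, Finset.mem_univ _, ?_⟩
      have hne : x i0 / ω i0 ≠ 0 := div_ne_zero hi0 (hω i0)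
      exact lt_of_le_of_ne (sq_nonneg _) (Ne.symm (pow_ne_zero 2 hne))
    -- S2
    set y : Fin (m * k) → ℝ := fun i => x i / (Δ * a i) with hy
    have hterm2 : ∀ i j : Fin (m * k),
        x i * (Q2 i j * x j)
          = (if i = j then (y i) ^ 2 else 0)
            + (if (i : ℕ) + 1 = (j : ℕ) then -(1 / 2) * (y i * y j) else 0)
            + (if (j : ℕ) + 1 = (i : ℕ) then -(1 / 2) * (y i * y j) else 0) := by
      intro i j
      rcases eq_or_ne i j with rfl | hne
      · rw [if_pos rfl, if_neg (show ¬((i : ℕ) + 1 = (i : ℕ)) by omega), hQ2diag]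
        simp only [hy, add_zero]
        field_simp
      · have hv : (i : ℕ) ≠ (j : ℕ) := fun h => hne (Fin.ext h)
        rw [if_neg hne]
        by_cases h1 : (i : ℕ) + 1 = (j : ℕ)
        · rw [if_pos h1, if_neg (by omega), (hQ2off i j h1).1]
          simp only [hy, zero_add, add_zero]
          field_simp
        · by_cases h2 : (j : ℕ) + 1 = (i : ℕ)
          · rw [if_neg h1, if_pos h2, (hQ2off j i h2).2]
            simp only [hy, zero_add, add_zero]
            field_simp
          · rw [if_neg h1, if_neg h2, hQ2far i j (by omega)]
            ring
    have hS2eq : x ⬝ᵥ Q2.mulVec x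
        = (∑ i, (y i) ^ 2)
          - (∑ i : Fin (m * k), ∑ j : Fin (m * k),
              if (i : ℕ) + 1 = (j : ℕ) then y i * y j else 0) := by
      simp only [dotProduct, Matrix.mulVec, Finset.mul_sum]
      simp_rw [hterm2, Finset.sum_add_distrib]
      have hA : (∑ i : Fin (m * k), ∑ j : Fin (m * k),
          if i = j then (y i) ^ 2 else 0) = ∑ i, (y i) ^ 2 := by
        refine Finset.sum_congr rfl fun i _ => ?_
        simp [Finset.sum_ite_eq]
      have hB : (∑ i : Fin (m * k), ∑ j : Fin (m * k),
          if (i : ℕ) + 1 = (j : ℕ) then -(1 / 2) * (y i * y j) else 0)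
          = -(1 / 2) * ∑ i : Fin (m * k), ∑ j : Fin (m * k),
              if (i : ℕ) + 1 = (j : ℕ) then y i * y j else 0 := by
        rw [Finset.mul_sum]
        refine Finset.sum_congr rfl fun i _ => ?_
        rw [Finset.mul_sum]
        refine Finset.sum_congr rfl fun j _ => ?_
        split <;> ring
      have hC : (∑ i : Fin (m * k), ∑ j : Fin (m * k),
          if (j : ℕ) + 1 = (i : ℕ) then -(1 / 2) * (y i * y j) else 0)
          = -(1 / 2) * ∑ i : Fin (m * k), ∑ j : Fin (m * k),
              if (i : ℕ) + 1 = (j : ℕ) then y i * y j else 0 := by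
        rw [Finset.sum_comm, Finset.mul_sum]
        refine Finset.sum_congr rfl fun j _ => ?_
        rw [Finset.mul_sum]
        refine Finset.sum_congr rfl fun i _ => ?_
        split <;> ring
      rw [hA, hB, hC]
      ring
    have hS2 : 0 ≤ x ⬝ᵥ Q2.mulVec x := by
      rw [hS2eq]
      have := ontrac_tridiag_nonneg y
      linarith
    -- S3
    set u : Fin (m * k) → ℝ := fun i => x i / σ (blk i) with hu
    have hterm3 : ∀ i j : Fin (m * k),
        x i * (Q3 i j * x j) = if blk i = blk j then u i * u j else 0 := by
      intro i j
      rw [hQ3]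
      rcases eq_or_ne (blk i) (blk j) with h | h
      · rw [if_pos h, if_pos h, hu]
        simp only
        rw [← h]
        field_simp
      · rw [if_neg h, if_neg h]
        ring
    have hinner : ∀ i j : Fin (m * k),
        (if blk i = blk j then u i * u j else 0)
          = ∑ b : Fin m, if blk i = b ∧ blk j = b then u i * u j else 0 := by
      intro i j
      rcases eq_or_ne (blk i) (blk j) with h | h
      · rw [if_pos h]
        have hcond : ∀ b : Fin m,
            (if blk i = b ∧ blk j = b then u i * u j else 0)
              = (if blk i = b then u i * u j else 0) := by
          intro b
          by_cases hb : blk i = b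
          · rw [if_pos ⟨hb, h ▸ hb⟩, if_pos hb]
          · rw [if_neg (fun hc => hb hc.1), if_neg hb]
        simp_rw [hcond]
        rw [Finset.sum_ite_eq]
        simp
      · rw [if_neg h, Finset.sum_eq_zero]
        intro b _
        exact if_neg fun hb => h (hb.1.trans hb.2.symm)
    have hS3eq : x ⬝ᵥ Q3.mulVec x
        = ∑ b : Fin m, (∑ i, if blk i = b then u i else 0) ^ 2 := by
      have e1 : x ⬝ᵥ Q3.mulVec x
          = ∑ i : Fin (m * k), ∑ j : Fin (m * k), ∑ b : Fin m,
              if blk i = b ∧ blk j = b then u i * u j else 0 := by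
        simp only [dotProduct, Matrix.mulVec, Finset.mul_sum]
        exact Finset.sum_congr rfl fun i _ => Finset.sum_congr rfl fun j _ => by
          rw [hterm3 i j, hinner i j]
      have e2 : (∑ i : Fin (m * k), ∑ j : Fin (m * k), ∑ b : Fin m,
              if blk i = b ∧ blk j = b then u i * u j else 0)
          = ∑ b : Fin m, ∑ i : Fin (m * k), ∑ j : Fin (m * k),
              if blk i = b ∧ blk j = b then u i * u j else 0 :=
        calc (∑ i : Fin (m * k), ∑ j : Fin (m * k), ∑ b : Fin m,
              if blk i = b ∧ blk j = b then u i * u j else 0)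
            = ∑ i : Fin (m * k), ∑ b : Fin m, ∑ j : Fin (m * k),
              if blk i = b ∧ blk j = b then u i * u j else 0 :=
              Finset.sum_congr rfl fun i _ => Finset.sum_comm
          _ = ∑ b : Fin m, ∑ i : Fin (m * k), ∑ j : Fin (m * k),
              if blk i = b ∧ blk j = b then u i * u j else 0 := Finset.sum_comm
      have e3 : ∀ b : Fin m,
          (∑ i : Fin (m * k), ∑ j : Fin (m * k),
              if blk i = b ∧ blk j = b then u i * u j else 0)
            = (∑ i, if blk i = b then u i else 0) ^ 2 := by
        intro b
        rw [sq, Finset.sum_mul_sum]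
        refine Finset.sum_congr rfl fun i _ => Finset.sum_congr rfl fun j _ => ?_
        rw [ite_zero_mul_ite_zero]
      rw [e1, e2]
      exact Finset.sum_congr rfl fun b _ => e3 b
    have hS3 : 0 ≤ x ⬝ᵥ Q3.mulVec x := by
      rw [hS3eq]
      exact Finset.sum_nonneg fun b _ => sq_nonneg _
    rw [hexp]
    linarith
  have hpd : Q.PosDef := by
    refine Matrix.PosDef.of_dotProduct_mulVec_pos hherm fun x hx => ?_
    simpa using key x hx
  refine ⟨hpd, fun c => ?_⟩
  refine ⟨convex_univ, fun p _ q _ hpq t s ht hs hts => ?_⟩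
  simp only [smul_eq_mul]
  have hquad : (t • p + s • q) ⬝ᵥ Q.mulVec (t • p + s • q)
      = t * t * (p ⬝ᵥ Q.mulVec p) + 2 * (t * s) * (p ⬝ᵥ Q.mulVec q)
        + s * s * (q ⬝ᵥ Q.mulVec q) := by
    simp only [Matrix.mulVec_add, Matrix.mulVec_smul, dotProduct_add, add_dotProduct,
      dotProduct_smul, smul_dotProduct, smul_eq_mul]
    rw [hsymm q p]
    ring
  have hlin : c ⬝ᵥ (t • p + s • q) = t * (c ⬝ᵥ p) + s * (c ⬝ᵥ q) := by
    simp [dotProduct_add, dotProduct_smul, smul_eq_mul]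
  have hd : 0 < (p ⬝ᵥ Q.mulVec p) - 2 * (p ⬝ᵥ Q.mulVec q) + (q ⬝ᵥ Q.mulVec q) := by
    have h := key (p - q) (sub_ne_zero.mpr hpq)
    simp only [Matrix.mulVec_sub, sub_dotProduct, dotProduct_sub] at h
    rw [hsymm q p] at h
    linarith
  have hs' : s = 1 - t := by linarith
  subst hs'
  rw [hquad, hlin]
  nlinarith [mul_pos (mul_pos ht hs) hd]
end
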